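/- Let $\pg$ be a finite-dimensional real inner product space and let $\theta:\mathfrak{gl}(\pg)\to\mathrm{End}(\Lambda^2\pg^*\otimes\pg)$ be the representation $\theta(A)\lambda := A\lambda(\cdot,\cdot) - \lambda(A\cdot,\cdot) - \lambda(\cdot,A\cdot)$. Fix $\mu_\pg\in\Lambda^2\pg^*\otimes\pg$ and define the moment map $\Mm_\lambda\in\mathfrak{gl}(\pg)$ by $\langle \Mm_\lambda, A\rangle = \tfrac14 \langle\theta(A)\lambda,\lambda\rangle$ for all $A$. Then for symmetric $A,B$, the derivative at the identity of $h\mapsto \Mm_{h\cdot\mu_\pg}$ satisfies $\langle d\Mm|_I A, B\rangle = \tfrac12\langle \theta(A)\mu_\pg, \theta(B)\mu_\pg\rangle$; in particular $d\Mm|_I$ is a self-adjoint operator on symmetric maps. -/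

import Mathlib

/-
STATEMENT 0: First variation of the moment map (Lemma dM / [homRF (36)]).
-/

noncomputable section

set_option linter.unusedSectionVars false

variable {V : Type*} [NormedAddCommGroup V] [InnerProductSpace ℝ V] [FiniteDimensional ℝ V]

/-- The representation `θ(A)λ = Aλ(·,·) - λ(A·,·) - λ(·,A·)`. -/
def theta (A : Module.End ℝ V) (lam : V → V → V) : V → V → V :=
  fun X Y => A (lam X Y) - lam (A X) Y - lam X (A Y)

/-- The inner product on `Λ²p*⊗p` relative to an orthonormal basis. -/
def bip {ι : Type*} [Fintype ι] (b : OrthonormalBasis ι ℝ V) (f g : V → V → V) : ℝ :=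
  ∑ i, ∑ j, (inner ℝ (f (b i) (b j)) (g (b i) (b j)) : ℝ)

/-- The trace inner product `⟨A,B⟩ = tr(A Bᵗ)` on `gl(p)`. -/
def eip (A B : Module.End ℝ V) : ℝ :=
  LinearMap.trace ℝ V (A ∘ₗ LinearMap.adjoint (B : V →ₗ[ℝ] V))

/-- The `GL(p)`-action `h·μ = h μ(h⁻¹·,h⁻¹·)`. -/
def act (h : Module.End ℝ V) (lam : V → V → V) : V → V → V :=
  fun X Y => h (lam (Ring.inverse h X) (Ring.inverse h Y))

/-! ### Auxiliary material -/

/-- `Module.End ℝ V` as a ring equiv onto continuous linear endomorphisms. -/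
def endCLM : Module.End ℝ V ≃+* (V →L[ℝ] V) :=
  { (LinearMap.toContinuousLinearMap : (V →ₗ[ℝ] V) ≃ₗ[ℝ] (V →L[ℝ] V)) with
    map_mul' := fun f g => by ext x; rfl }

@[simp] lemma endCLM_apply (f : Module.End ℝ V) (x : V) : endCLM f x = f x := rfl

lemma endCLM_smul (t : ℝ) (f : Module.End ℝ V) : endCLM (t • f) = t • endCLM f := by
  ext x; rfl

lemma isUnit_endCLM_iff (x : Module.End ℝ V) : IsUnit (endCLM x) ↔ IsUnit x :=
  ⟨fun hu => by simpa using hu.map (endCLM (V := V)).symm.toRingHom,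
   fun hu => hu.map (endCLM (V := V)).toRingHom⟩

lemma ringInverse_endCLM (x : Module.End ℝ V) :
    Ring.inverse (endCLM x) = endCLM (Ring.inverse x) := by
  by_cases h : IsUnit x
  · obtain ⟨u, rfl⟩ := h
    have h1 : endCLM (↑u : Module.End ℝ V)
        = ↑(Units.map (endCLM (V := V)).toMonoidHom u) := rfl
    rw [h1, Ring.inverse_unit, Ring.inverse_unit]
    rfl
  · rw [Ring.inverse_non_unit _ h, Ring.inverse_non_unit, map_zero]
    exact fun hu => h ((isUnit_endCLM_iff x).mp hu)

/-- A bilinear map bundled as a continuous bilinear map. -/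
def clm2 (μ : V →ₗ[ℝ] V →ₗ[ℝ] V) : V →L[ℝ] V →L[ℝ] V :=
  LinearMap.toContinuousLinearMap
    { toFun := fun x => LinearMap.toContinuousLinearMap (μ x)
      map_add' := fun x y => by ext z; simp
      map_smul' := fun c x => by ext z; simp }

@[simp] lemma clm2_apply (μ : V →ₗ[ℝ] V →ₗ[ℝ] V) (x y : V) : clm2 μ x y = μ x y := rfl

/-- The representation `θ(A)` as a bundled bilinear map. -/
def thetaL (A : Module.End ℝ V) (m : V →ₗ[ℝ] V →ₗ[ℝ] V) : V →ₗ[ℝ] V →ₗ[ℝ] V :=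
  LinearMap.mk₂ ℝ (fun X Y => A (m X Y) - m (A X) Y - m X (A Y))
    (fun x y z => by simp [map_add]; abel)
    (fun c x y => by simp [map_smul, smul_sub])
    (fun x y z => by simp [map_add]; abel)
    (fun c x y => by simp [map_smul, smul_sub])

@[simp] lemma thetaL_apply (A : Module.End ℝ V) (m : V →ₗ[ℝ] V →ₗ[ℝ] V) (X Y : V) :
    thetaL A m X Y = A (m X Y) - m (A X) Y - m X (A Y) := rfl

lemma hasDerivAt_rinv (A' : V →L[ℝ] V) :
    HasDerivAt (fun t : ℝ => Ring.inverse ((1 : V →L[ℝ] V) + t • A')) (-A') 0 := by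
  have h1 : HasDerivAt (fun t : ℝ => (1 : V →L[ℝ] V) + t • A') A' 0 := by
    simpa using ((hasDerivAt_id (0:ℝ)).smul_const A').const_add (1 : V →L[ℝ] V)
  have h2 := (hasFDerivAt_ringInverse (𝕜 := ℝ) (R := V →L[ℝ] V) 1).comp_hasDerivAt_of_eq 0
    h1 (by simp)
  exact h2

lemma act_eq (A : Module.End ℝ V) (μ : V →ₗ[ℝ] V →ₗ[ℝ] V) (t : ℝ) (X Y : V) :
    act (1 + t • A) (fun X Y => μ X Y) X Y =
      clm2 μ (Ring.inverse (1 + t • endCLM A) X) (Ring.inverse (1 + t • endCLM A) Y)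
      + t • (endCLM A) (clm2 μ (Ring.inverse (1 + t • endCLM A) X)
          (Ring.inverse (1 + t • endCLM A) Y)) := by
  have h1 : endCLM (Ring.inverse (1 + t • A)) = Ring.inverse (1 + t • endCLM A) := by
    rw [← ringInverse_endCLM, map_add, map_one, endCLM_smul]
  have hZ : ∀ Z : V, (Ring.inverse (1 + t • A) : Module.End ℝ V) Z
      = Ring.inverse (1 + t • endCLM A) Z := by
    intro Z
    simpa using DFunLike.congr_fun h1 Z
  simp only [act, hZ, clm2_apply, endCLM_apply]
  simp [LinearMap.add_apply]

lemma hasDerivAt_act (A : Module.End ℝ V) (μ : V →ₗ[ℝ] V →ₗ[ℝ] V) (X Y : V) :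
    HasDerivAt (fun t : ℝ => act (1 + t • A) (fun X Y => μ X Y) X Y)
      (A (μ X Y) - μ (A X) Y - μ X (A Y)) 0 := by
  set A' := (endCLM A : V →L[ℝ] V) with hA'
  have hu : ∀ Z : V, HasDerivAt
      (fun t : ℝ => Ring.inverse ((1:V →L[ℝ] V) + t • A') Z) (-(A' Z)) 0 := by
    intro Z
    simpa using (hasDerivAt_rinv A').clm_apply (hasDerivAt_const (0:ℝ) Z)
  have hw : HasDerivAt (fun t : ℝ => clm2 μ (Ring.inverse ((1:V →L[ℝ] V) + t • A') X)
        (Ring.inverse ((1:V →L[ℝ] V) + t • A') Y))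
      (- μ (A X) Y - μ X (A Y)) 0 := by
    have hc := ((clm2 μ).hasFDerivAt).comp_hasDerivAt 0 (hu X)
    have h2 := HasDerivAt.clm_apply (u := fun t : ℝ =>
        Ring.inverse ((1:V →L[ℝ] V) + t • A') Y) hc (hu Y)
    simpa [Ring.inverse_one, sub_eq_add_neg, hA'] using h2
  have hAw := ((endCLM A).hasFDerivAt).comp_hasDerivAt 0 hw
  have h3 := hw.fun_add ((hasDerivAt_id (0:ℝ)).fun_smul hAw)
  have h4 : (fun t : ℝ => act (1 + t • A) (fun X Y => μ X Y) X Y)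
      = fun t : ℝ => clm2 μ (Ring.inverse (1 + t • endCLM A) X)
          (Ring.inverse (1 + t • endCLM A) Y)
        + t • (endCLM A) (clm2 μ (Ring.inverse (1 + t • endCLM A) X)
            (Ring.inverse (1 + t • endCLM A) Y)) :=
    funext fun t => act_eq A μ t X Y
  rw [h4]
  convert h3 using 1
  · simp [Ring.inverse_one, hA']
  simp [Ring.inverse_one, hA']
  abel

section swap
variable {n : ℕ} (b : OrthonormalBasis (Fin n) ℝ V) {B : Module.End ℝ V}
  (hB : LinearMap.IsSymmetric (B : V →ₗ[ℝ] V)) (m p : V →ₗ[ℝ] V →ₗ[ℝ] V)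
include hB

lemma swap_fst :
    ∑ i, ∑ j, (inner ℝ (m (B (b i)) (b j)) (p (b i) (b j)) : ℝ)
      = ∑ i, ∑ j, (inner ℝ (m (b i) (b j)) (p (B (b i)) (b j)) : ℝ) := by
  have hrep : ∀ i, B (b i) = ∑ k, (inner ℝ (b k) (B (b i)) : ℝ) • b k := fun i =>
    (b.sum_repr' _).symm
  have hc : ∀ i k, (inner ℝ (b k) (B (b i)) : ℝ) = (inner ℝ (b i) (B (b k)) : ℝ) := by
    intro i k
    rw [real_inner_comm, hB, real_inner_comm]
  have hL : ∀ i j, (inner ℝ (m (B (b i)) (b j)) (p (b i) (b j)) : ℝ)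
      = ∑ k, (inner ℝ (b k) (B (b i)) : ℝ) * (inner ℝ (m (b k) (b j)) (p (b i) (b j)) : ℝ) := by
    intro i j
    conv_lhs => rw [hrep i]
    simp [LinearMap.sum_apply, sum_inner, real_inner_smul_left]
  have hR : ∀ i j, (inner ℝ (m (b i) (b j)) (p (B (b i)) (b j)) : ℝ)
      = ∑ k, (inner ℝ (b k) (B (b i)) : ℝ) * (inner ℝ (m (b i) (b j)) (p (b k) (b j)) : ℝ) := by
    intro i j
    conv_lhs => rw [hrep i]
    simp [LinearMap.sum_apply, inner_sum, real_inner_smul_right]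
  simp only [hL, hR]
  calc ∑ i, ∑ j, ∑ k, (inner ℝ (b k) (B (b i)) : ℝ)
          * (inner ℝ (m (b k) (b j)) (p (b i) (b j)) : ℝ)
      = ∑ i, ∑ k, ∑ j, (inner ℝ (b k) (B (b i)) : ℝ)
          * (inner ℝ (m (b k) (b j)) (p (b i) (b j)) : ℝ) :=
        Finset.sum_congr rfl fun i _ => Finset.sum_comm
    _ = ∑ k, ∑ i, ∑ j, (inner ℝ (b k) (B (b i)) : ℝ)
          * (inner ℝ (m (b k) (b j)) (p (b i) (b j)) : ℝ) := Finset.sum_comm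
    _ = ∑ i, ∑ k, ∑ j, (inner ℝ (b k) (B (b i)) : ℝ)
          * (inner ℝ (m (b i) (b j)) (p (b k) (b j)) : ℝ) := by
        refine Finset.sum_congr rfl fun k _ => Finset.sum_congr rfl fun i _ =>
          Finset.sum_congr rfl fun j _ => ?_
        rw [hc]
    _ = ∑ i, ∑ j, ∑ k, (inner ℝ (b k) (B (b i)) : ℝ)
          * (inner ℝ (m (b i) (b j)) (p (b k) (b j)) : ℝ) :=
        Finset.sum_congr rfl fun i _ => Finset.sum_comm

lemma swap_snd :
    ∑ i, ∑ j, (inner ℝ (m (b i) (B (b j))) (p (b i) (b j)) : ℝ)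
      = ∑ i, ∑ j, (inner ℝ (m (b i) (b j)) (p (b i) (B (b j))) : ℝ) := by
  have hrep : ∀ j, B (b j) = ∑ k, (inner ℝ (b k) (B (b j)) : ℝ) • b k := fun j =>
    (b.sum_repr' _).symm
  have hc : ∀ j k, (inner ℝ (b k) (B (b j)) : ℝ) = (inner ℝ (b j) (B (b k)) : ℝ) := by
    intro j k
    rw [real_inner_comm, hB, real_inner_comm]
  have hL : ∀ i j, (inner ℝ (m (b i) (B (b j))) (p (b i) (b j)) : ℝ)
      = ∑ k, (inner ℝ (b k) (B (b j)) : ℝ) * (inner ℝ (m (b i) (b k)) (p (b i) (b j)) : ℝ) := by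
    intro i j
    conv_lhs => rw [hrep j]
    simp [sum_inner, real_inner_smul_left]
  have hR : ∀ i j, (inner ℝ (m (b i) (b j)) (p (b i) (B (b j))) : ℝ)
      = ∑ k, (inner ℝ (b k) (B (b j)) : ℝ) * (inner ℝ (m (b i) (b j)) (p (b i) (b k)) : ℝ) := by
    intro i j
    conv_lhs => rw [hrep j]
    simp [inner_sum, real_inner_smul_right]
  simp only [hL, hR]
  refine Finset.sum_congr rfl fun i _ => ?_
  calc ∑ j, ∑ k, (inner ℝ (b k) (B (b j)) : ℝ)
          * (inner ℝ (m (b i) (b k)) (p (b i) (b j)) : ℝ)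
      = ∑ k, ∑ j, (inner ℝ (b k) (B (b j)) : ℝ)
          * (inner ℝ (m (b i) (b k)) (p (b i) (b j)) : ℝ) := Finset.sum_comm
    _ = ∑ j, ∑ k, (inner ℝ (b k) (B (b j)) : ℝ)
          * (inner ℝ (m (b i) (b j)) (p (b i) (b k)) : ℝ) := by
        refine Finset.sum_congr rfl fun k _ => Finset.sum_congr rfl fun j _ => ?_
        rw [hc]

lemma thetaL_adjoint :
    ∑ i, ∑ j, (inner ℝ (thetaL B m (b i) (b j)) (p (b i) (b j)) : ℝ)
      = ∑ i, ∑ j, (inner ℝ (m (b i) (b j)) (thetaL B p (b i) (b j)) : ℝ) := by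
  simp only [thetaL_apply, inner_sub_left, inner_sub_right, Finset.sum_sub_distrib]
  rw [swap_fst b hB m p, swap_snd b hB m p]
  congr 2
  refine Finset.sum_congr rfl fun i _ => Finset.sum_congr rfl fun j _ => ?_
  exact hB (m (b i) (b j)) (p (b i) (b j))

end swap

theorem statement0 {n : ℕ} (b : OrthonormalBasis (Fin n) ℝ V)
    (μ : V →ₗ[ℝ] V →ₗ[ℝ] V) (halt : ∀ X, μ X X = 0)
    (M : Module.End ℝ V → Module.End ℝ V)
    (hM : ∀ h : Module.End ℝ V, IsUnit h → ∀ A : Module.End ℝ V,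
      eip (M h) A =
        (1/4) * bip b (theta A (act h (fun X Y => μ X Y))) (act h (fun X Y => μ X Y)))
    (A B : Module.End ℝ V)
    (hA : LinearMap.IsSymmetric (A : V →ₗ[ℝ] V))
    (hB : LinearMap.IsSymmetric (B : V →ₗ[ℝ] V)) :
    HasDerivAt (fun t : ℝ => eip (M (1 + t • A)) B)
      ((1/2) * bip b (theta A (fun X Y => μ X Y)) (theta B (fun X Y => μ X Y))) 0 ∧
    (1/2) * bip b (theta A (fun X Y => μ X Y)) (theta B (fun X Y => μ X Y)) =
      (1/2) * bip b (theta B (fun X Y => μ X Y)) (theta A (fun X Y => μ X Y)) := by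
  have hlam : ∀ X Y : V, HasDerivAt (fun t : ℝ => act (1 + t • A) (fun X Y => μ X Y) X Y)
      (thetaL A μ X Y) 0 := fun X Y => hasDerivAt_act A μ X Y
  have hlam0 : ∀ X Y : V, act (1 + (0:ℝ) • A) (fun X Y => μ X Y) X Y = μ X Y := by
    intro X Y
    simp [act]
  have hθB : ∀ i j : Fin n, HasDerivAt
      (fun t : ℝ => theta B (act (1 + t • A) (fun X Y => μ X Y)) (b i) (b j))
      (thetaL B (thetaL A μ) (b i) (b j)) 0 := by
    intro i j
    have h1 := ((endCLM B).hasFDerivAt).comp_hasDerivAt 0 (hlam (b i) (b j))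
    exact (h1.sub (hlam (B (b i)) (b j))).sub (hlam (b i) (B (b j)))
  have hin : ∀ i j : Fin n, HasDerivAt
      (fun t : ℝ => (inner ℝ (theta B (act (1 + t • A) (fun X Y => μ X Y)) (b i) (b j))
        (act (1 + t • A) (fun X Y => μ X Y) (b i) (b j)) : ℝ))
      ((inner ℝ (thetaL B μ (b i) (b j)) (thetaL A μ (b i) (b j)) : ℝ)
        + (inner ℝ (thetaL B (thetaL A μ) (b i) (b j)) (μ (b i) (b j)) : ℝ)) 0 := by
    intro i j
    have h := HasDerivAt.inner ℝ (hθB i j) (hlam (b i) (b j))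
    have e1 : theta B (act (1 + (0:ℝ) • A) (fun X Y => μ X Y)) (b i) (b j)
        = thetaL B μ (b i) (b j) := by
      simp [theta, act, Ring.inverse_one]
    have e2 : act (1 + (0:ℝ) • A) (fun X Y => μ X Y) (b i) (b j) = μ (b i) (b j) := hlam0 _ _
    rw [e1, e2] at h
    exact h
  have hsum : HasDerivAt
      (fun t : ℝ => ∑ i, ∑ j, (inner ℝ (theta B (act (1 + t • A) (fun X Y => μ X Y)) (b i) (b j))
        (act (1 + t • A) (fun X Y => μ X Y) (b i) (b j)) : ℝ))
      (∑ i, ∑ j, ((inner ℝ (thetaL B μ (b i) (b j)) (thetaL A μ (b i) (b j)) : ℝ)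
        + (inner ℝ (thetaL B (thetaL A μ) (b i) (b j)) (μ (b i) (b j)) : ℝ))) 0 :=
    HasDerivAt.fun_sum fun i _ => HasDerivAt.fun_sum fun j _ => hin i j
  have hg : HasDerivAt
      (fun t : ℝ => (1/4 : ℝ) * bip b (theta B (act (1 + t • A) (fun X Y => μ X Y)))
        (act (1 + t • A) (fun X Y => μ X Y)))
      ((1/4 : ℝ) * ∑ i, ∑ j, ((inner ℝ (thetaL B μ (b i) (b j)) (thetaL A μ (b i) (b j)) : ℝ)
        + (inner ℝ (thetaL B (thetaL A μ) (b i) (b j)) (μ (b i) (b j)) : ℝ))) 0 :=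
    hsum.const_mul (1/4 : ℝ)
  have hS1 : ∑ i, ∑ j, (inner ℝ (thetaL B μ (b i) (b j)) (thetaL A μ (b i) (b j)) : ℝ)
      = bip b (theta A (fun X Y => μ X Y)) (theta B (fun X Y => μ X Y)) := by
    refine Finset.sum_congr rfl fun i _ => Finset.sum_congr rfl fun j _ => ?_
    exact real_inner_comm _ _
  have hS2 : ∑ i, ∑ j, (inner ℝ (thetaL B (thetaL A μ) (b i) (b j)) (μ (b i) (b j)) : ℝ)
      = bip b (theta A (fun X Y => μ X Y)) (theta B (fun X Y => μ X Y)) := by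
    rw [thetaL_adjoint b hB (thetaL A μ) μ]
    rfl
  have hD : (1/4 : ℝ) * ∑ i, ∑ j,
        ((inner ℝ (thetaL B μ (b i) (b j)) (thetaL A μ (b i) (b j)) : ℝ)
        + (inner ℝ (thetaL B (thetaL A μ) (b i) (b j)) (μ (b i) (b j)) : ℝ))
      = (1/2) * bip b (theta A (fun X Y => μ X Y)) (theta B (fun X Y => μ X Y)) := by
    have : ∑ i, ∑ j, ((inner ℝ (thetaL B μ (b i) (b j)) (thetaL A μ (b i) (b j)) : ℝ)
        + (inner ℝ (thetaL B (thetaL A μ) (b i) (b j)) (μ (b i) (b j)) : ℝ))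
        = (∑ i, ∑ j, (inner ℝ (thetaL B μ (b i) (b j)) (thetaL A μ (b i) (b j)) : ℝ))
        + ∑ i, ∑ j, (inner ℝ (thetaL B (thetaL A μ) (b i) (b j)) (μ (b i) (b j)) : ℝ) := by
      simp [Finset.sum_add_distrib]
    rw [this, hS1, hS2]
    ring
  have hUnit : ∀ᶠ t : ℝ in nhds 0, IsUnit ((1 + t • A : Module.End ℝ V)) := by
    have hε : (0:ℝ) < (‖endCLM A‖ + 1)⁻¹ := by positivity
    filter_upwards [Metric.ball_mem_nhds (0:ℝ) hε] with t ht
    rw [← isUnit_endCLM_iff, map_add, map_one, endCLM_smul]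
    have hnorm : ‖-(t • endCLM A)‖ < 1 := by
      rw [norm_neg]
      have hns : ‖t • endCLM A‖ = |t| * ‖endCLM A‖ := by
        have h := norm_smul t (endCLM A)
        rwa [Real.norm_eq_abs] at h
      rw [hns]
      rw [Metric.mem_ball, Real.dist_eq, sub_zero] at ht
      have h0 : (0:ℝ) ≤ ‖endCLM A‖ := norm_nonneg _
      have h1 : (0:ℝ) < ‖endCLM A‖ + 1 := by linarith
      have h2 : |t| * (‖endCLM A‖ + 1) < 1 := by
        have := (mul_lt_mul_of_pos_right ht h1)
        rwa [inv_mul_cancel₀ (ne_of_gt h1)] at this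
      nlinarith [abs_nonneg t]
    have := isUnit_one_sub_of_norm_lt_one hnorm
    simpa using this
  have hfeq : (fun t : ℝ => eip (M (1 + t • A)) B) =ᶠ[nhds 0]
      (fun t : ℝ => (1/4 : ℝ) * bip b (theta B (act (1 + t • A) (fun X Y => μ X Y)))
        (act (1 + t • A) (fun X Y => μ X Y))) := by
    filter_upwards [hUnit] with t ht using hM _ ht B
  constructor
  · exact (hD ▸ hg).congr_of_eventuallyEq hfeq
  · have hcomm : bip b (theta A (fun X Y => μ X Y)) (theta B (fun X Y => μ X Y))
        = bip b (theta B (fun X Y => μ X Y)) (theta A (fun X Y => μ X Y)) := by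
      unfold bip
      exact Finset.sum_congr rfl fun i _ => Finset.sum_congr rfl fun j _ =>
        real_inner_comm _ _
    rw [hcomm]
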